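/- arXiv:0802.1006 — 2 statements merged into one kernel-verified Lean document; each statement's English description precedes it below -/
import Mathlib

section
/- Let p be a prime and R a commutative ring in which p·1 = 0. Let f : F → G be a homomorphism of formal group laws over R whose linear coefficient is zero. Then there exists a unique power series g ∈ R[[T]] with constant term 0 such that f(T) = g(T^p), and this g is a homomorphism of formal group laws F^{(p)} → G, i.e. g(F^{(p)}(X,Y)) = G(g(X), g(Y)) in R[[X,Y]]. -/
namespace FGL

variable {R : Type*} [CommRing R]

/-- `subst2 F a b` is the substitution `F(a,b)` of the power series `a`, `b`
(with zero constant term) into the two-variable power series `F`. -/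
noncomputable def subst2 {σ : Type*} (F : MvPowerSeries (Fin 2) R)
    (a b : MvPowerSeries σ R) : MvPowerSeries σ R :=
  fun d =>
    ∑ ij ∈ Finset.range ((d.sum fun _ k => k) + 1) ×ˢ
        Finset.range ((d.sum fun _ k => k) + 1),
      MvPowerSeries.coeff (Finsupp.single 0 ij.1 + Finsupp.single 1 ij.2) F *
        MvPowerSeries.coeff d (a ^ ij.1 * b ^ ij.2)

/-- `subst1 f G` is the substitution `f(G)` of the power series `G`
(with zero constant term) into the one-variable power series `f`. -/
noncomputable def subst1 {σ : Type*} (f : PowerSeries R) (G : MvPowerSeries σ R) :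
    MvPowerSeries σ R :=
  fun d =>
    ∑ n ∈ Finset.range ((d.sum fun _ k => k) + 1),
      PowerSeries.coeff n f * MvPowerSeries.coeff d (G ^ n)

/-- Composition `f(g)` of one-variable power series (`g` with zero constant term). -/
noncomputable def pcomp (f g : PowerSeries R) : PowerSeries R := subst1 f g

/-- A formal group law over `R`: a two-variable power series `F(X,Y)` with
`F(X,0) = X`, `F(0,Y) = Y`, `F(X,Y) = F(Y,X)` and `F(F(X,Y),Z) = F(X,F(Y,Z))`. -/
structure IsFGL (F : MvPowerSeries (Fin 2) R) : Prop where
  unit_left : subst2 F (MvPowerSeries.X 0) 0 = MvPowerSeries.X 0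
  unit_right : subst2 F 0 (MvPowerSeries.X 1) = MvPowerSeries.X 1
  comm : subst2 F (MvPowerSeries.X 1) (MvPowerSeries.X 0) = F
  assoc : subst2 F (subst2 F (MvPowerSeries.X 0) (MvPowerSeries.X 1))
        (MvPowerSeries.X 2 : MvPowerSeries (Fin 3) R)
      = subst2 F (MvPowerSeries.X 0) (subst2 F (MvPowerSeries.X 1) (MvPowerSeries.X 2))

/-- A homomorphism `f : F → G` of formal group laws: a one-variable power series with
zero constant term such that `f(F(X,Y)) = G(f(X), f(Y))`. -/
structure IsHom (F G : MvPowerSeries (Fin 2) R) (f : PowerSeries R) : Prop where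
  const : PowerSeries.constantCoeff f = 0
  hom : subst1 f F =
    subst2 G (subst1 f (MvPowerSeries.X 0)) (subst1 f (MvPowerSeries.X 1))

/-- The coefficientwise Frobenius twist `F^{(p)}`. -/
noncomputable def frob (p : ℕ) (F : MvPowerSeries (Fin 2) R) : MvPowerSeries (Fin 2) R :=
  fun d => (MvPowerSeries.coeff d F) ^ p

/-- The one-variable power series `F_Y(X,0)`, whose coefficient of `X^n` is the
coefficient of `X^n Y` in `F`. -/
noncomputable def FY0 (F : MvPowerSeries (Fin 2) R) : PowerSeries R :=
  PowerSeries.mk fun n =>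
    MvPowerSeries.coeff (Finsupp.single 0 n + Finsupp.single 1 1) F

/-- The formal partial derivative `F_X(X,Y)` with respect to the first variable. -/
noncomputable def FX (F : MvPowerSeries (Fin 2) R) : MvPowerSeries (Fin 2) R :=
  fun d => ((d 0 + 1 : ℕ) : R) * MvPowerSeries.coeff (d + Finsupp.single 0 1) F

/-- The `n`-series `[n]_F` of a formal group law, defined by `[0]_F = 0` and
`[n+1]_F(X) = F([n]_F(X), X)`. -/
noncomputable def nSeries (F : MvPowerSeries (Fin 2) R) : ℕ → PowerSeries R
  | 0 => 0
  | n + 1 => subst2 F (nSeries F n) PowerSeries.X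


open Finsupp Finset

lemma coeff_eq {σ : Type*} (d : σ →₀ ℕ) (A : MvPowerSeries σ R) :
    MvPowerSeries.coeff d A = A d := rfl

lemma fin2_eq (d : Fin 2 →₀ ℕ) : d = single 0 (d 0) + single 1 (d 1) := by
  ext i; fin_cases i <;> simp [Finsupp.single_apply]

lemma fin2_ext {d e : Fin 2 →₀ ℕ} (h0 : d 0 = e 0) (h1 : d 1 = e 1) : d = e := by
  ext i; fin_cases i <;> assumption

lemma fin2_sum (d : Fin 2 →₀ ℕ) : (d.sum fun _ k => k) = d 0 + d 1 := by
  rw [Finsupp.sum_fintype _ _ (fun _ => rfl), Fin.sum_univ_two]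

lemma single01 (a b : ℕ) : (single (0 : Fin 2) a + single 1 b : Fin 2 →₀ ℕ) 0 = a ∧
    (single (0 : Fin 2) a + single 1 b : Fin 2 →₀ ℕ) 1 = b := by
  constructor <;> simp [Finsupp.single_apply]

lemma sum_single01 (a b : ℕ) :
    ((single (0:Fin 2) a + single 1 b).sum fun _ k => k) = a + b := by
  rw [fin2_sum, (single01 a b).1, (single01 a b).2]

lemma apply_le_sum {σ : Type*} (d : σ →₀ ℕ) (s : σ) : d s ≤ d.sum fun _ k => k := by
  by_cases hmem : s ∈ d.support
  · exact Finset.single_le_sum (f := fun j => d j) (fun _ _ => Nat.zero_le _) hmem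
  · simp [Finsupp.notMem_support_iff.mp hmem]

lemma sum_add_eq {σ : Type*} (u v : σ →₀ ℕ) :
    ((u + v).sum fun _ k => k) = (u.sum fun _ k => k) + (v.sum fun _ k => k) :=
  Finsupp.sum_add_index' (fun _ => rfl) (fun _ _ _ => rfl)

/-- order lemma: powers of a series with zero constant term -/
lemma coeff_pow_zero {σ : Type*} {a : MvPowerSeries σ R} (ha : a 0 = 0) :
    ∀ (n : ℕ) (d : σ →₀ ℕ), (d.sum fun _ k => k) < n → MvPowerSeries.coeff d (a ^ n) = 0 := by
  classical
  intro n
  induction n with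
  | zero => intro d h; omega
  | succ n ih =>
    intro d hd
    rw [pow_succ, MvPowerSeries.coeff_mul]
    refine Finset.sum_eq_zero fun uv huv => ?_
    rw [Finset.HasAntidiagonal.mem_antidiagonal] at huv
    by_cases hv : uv.2 = 0
    · have : MvPowerSeries.coeff uv.2 a = 0 := by rw [hv]; exact ha
      rw [this, mul_zero]
    · have hsum : (uv.1.sum fun _ k => k) + (uv.2.sum fun _ k => k) = d.sum fun _ k => k := by
        rw [← huv, sum_add_eq]
      have hv1 : 1 ≤ uv.2.sum fun _ k => k := by
        rcases Finsupp.ne_iff.mp hv with ⟨i, hi⟩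
        simp only [Finsupp.coe_zero, Pi.zero_apply] at hi
        have := apply_le_sum uv.2 i
        omega
      have : (uv.1.sum fun _ k => k) < n := by omega
      rw [ih uv.1 this, zero_mul]

lemma coeff_mulpow_zero {σ : Type*} {a b : MvPowerSeries σ R} (ha : a 0 = 0) (hb : b 0 = 0)
    {i j : ℕ} {d : σ →₀ ℕ} (h : (d.sum fun _ k => k) < i + j) :
    MvPowerSeries.coeff d (a ^ i * b ^ j) = 0 := by
  classical
  rw [MvPowerSeries.coeff_mul]
  refine Finset.sum_eq_zero fun uv huv => ?_
  rw [Finset.HasAntidiagonal.mem_antidiagonal] at huv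
  have hsum : (uv.1.sum fun _ k => k) + (uv.2.sum fun _ k => k) = d.sum fun _ k => k := by
    rw [← huv, sum_add_eq]
  by_cases h1 : (uv.1.sum fun _ k => k) < i
  · rw [coeff_pow_zero ha i uv.1 h1, zero_mul]
  · have : (uv.2.sum fun _ k => k) < j := by omega
    rw [coeff_pow_zero hb j uv.2 this, mul_zero]

lemma subst1_apply {σ : Type*} (f : PowerSeries R) (A : MvPowerSeries σ R) (d : σ →₀ ℕ) :
    subst1 f A d = ∑ n ∈ Finset.range ((d.sum fun _ k => k) + 1),
      PowerSeries.coeff n f * MvPowerSeries.coeff d (A ^ n) := rfl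

lemma subst2_apply {σ : Type*} (F : MvPowerSeries (Fin 2) R) (a b : MvPowerSeries σ R)
    (d : σ →₀ ℕ) : subst2 F a b d =
    ∑ ij ∈ Finset.range ((d.sum fun _ k => k) + 1) ×ˢ
        Finset.range ((d.sum fun _ k => k) + 1),
      MvPowerSeries.coeff (Finsupp.single 0 ij.1 + Finsupp.single 1 ij.2) F *
        MvPowerSeries.coeff d (a ^ ij.1 * b ^ ij.2) := rfl

lemma subst1_X {σ : Type*} [DecidableEq σ] (f : PowerSeries R) (s : σ) (d : σ →₀ ℕ) :
    subst1 f (MvPowerSeries.X s) d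
      = if d = single s (d s) then PowerSeries.coeff (d s) f else 0 := by
  rw [subst1_apply]
  by_cases h : d = single s (d s)
  · rw [if_pos h]
    rw [Finset.sum_eq_single (d s)]
    · rw [MvPowerSeries.coeff_X_pow, if_pos h, mul_one]
    · intro n _ hn
      rw [MvPowerSeries.coeff_X_pow, if_neg, mul_zero]
      intro hd; apply hn
      rw [hd, Finsupp.single_eq_same]
    · intro hmem; exact absurd (Finset.mem_range.mpr (Nat.lt_succ_of_le (apply_le_sum d s))) hmem
  · rw [if_neg h]
    refine Finset.sum_eq_zero fun n _ => ?_
    rw [MvPowerSeries.coeff_X_pow, if_neg, mul_zero]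
    intro hd; apply h
    conv_lhs => rw [hd]
    rw [hd, Finsupp.single_eq_same]

lemma coeff_single0_F {F : MvPowerSeries (Fin 2) R} (hF : IsFGL F) (n : ℕ) :
    MvPowerSeries.coeff (single 0 n) F = if n = 1 then 1 else 0 := by
  have h := congrFun hF.unit_left (single 0 n : ℕ →₀ ℕ)
  rw [subst2_apply] at h
  rw [Finset.sum_eq_single (n, 0)] at h
  · simp only [Finsupp.single_zero, add_zero, pow_zero, mul_one] at h
    rw [MvPowerSeries.coeff_X_pow, if_pos rfl, mul_one] at h
    rw [h, ← coeff_eq _ (MvPowerSeries.X 0), MvPowerSeries.coeff_X]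
    simp only [(Finsupp.single_injective (0 : ℕ)).eq_iff]
  · intro ij _ hne
    rcases Nat.eq_zero_or_pos ij.2 with h2 | h2
    · have h1 : ij.1 ≠ n := fun h1 => hne (Prod.ext h1 h2)
      rw [h2, pow_zero, mul_one, MvPowerSeries.coeff_X_pow, if_neg, mul_zero]
      intro hc
      exact h1 ((Finsupp.single_injective (0 : ℕ)).eq_iff.mp hc).symm
    · rw [zero_pow (by omega), mul_zero, map_zero, mul_zero]
  · intro hmem
    refine absurd (Finset.mem_product.mpr ⟨?_, ?_⟩) hmem
    · rw [Finset.mem_range]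
      have h1 := apply_le_sum (single 0 n : ℕ →₀ ℕ) 0
      rw [Finsupp.single_eq_same] at h1
      omega
    · rw [Finset.mem_range]; omega

lemma coeff_single1_F {F : MvPowerSeries (Fin 2) R} (hF : IsFGL F) (n : ℕ) :
    MvPowerSeries.coeff (single 1 n) F = if n = 1 then 1 else 0 := by
  have h := congrFun hF.unit_right (single 1 n : ℕ →₀ ℕ)
  rw [subst2_apply] at h
  rw [Finset.sum_eq_single (0, n)] at h
  · simp only [Finsupp.single_zero, zero_add, pow_zero, one_mul] at h
    rw [MvPowerSeries.coeff_X_pow, if_pos rfl, mul_one] at h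
    rw [h, ← coeff_eq _ (MvPowerSeries.X 1), MvPowerSeries.coeff_X]
    simp only [(Finsupp.single_injective (1 : ℕ)).eq_iff]
  · intro ij _ hne
    rcases Nat.eq_zero_or_pos ij.1 with h1 | h1
    · have h2 : ij.2 ≠ n := fun h2 => hne (Prod.ext h1 h2)
      rw [h1, pow_zero, one_mul, MvPowerSeries.coeff_X_pow, if_neg, mul_zero]
      intro hc
      exact h2 ((Finsupp.single_injective (1 : ℕ)).eq_iff.mp hc).symm
    · rw [zero_pow (by omega), zero_mul, map_zero, mul_zero]
  · intro hmem
    refine absurd (Finset.mem_product.mpr ⟨?_, ?_⟩) hmem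
    · rw [Finset.mem_range]; omega
    · rw [Finset.mem_range]
      have h1 := apply_le_sum (single 1 n : ℕ →₀ ℕ) 1
      rw [Finsupp.single_eq_same] at h1
      omega

lemma constF_zero {F : MvPowerSeries (Fin 2) R} (hF : IsFGL F) : F 0 = 0 := by
  have h := coeff_single0_F hF 0
  rw [Finsupp.single_zero] at h
  rw [← coeff_eq 0 F, h]
  simp


lemma eq_single0 {u : Fin 2 →₀ ℕ} (h : u 1 = 0) : u = single 0 (u 0) := by
  conv_lhs => rw [fin2_eq u]
  rw [h, Finsupp.single_zero, add_zero]

lemma eq_single1 {u : Fin 2 →₀ ℕ} (h : u 0 = 0) : u = single 1 (u 1) := by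
  conv_lhs => rw [fin2_eq u]
  rw [h, Finsupp.single_zero, zero_add]

lemma antidiag_apply {d u v : Fin 2 →₀ ℕ} (h : u + v = d) (i : Fin 2) :
    u i + v i = d i := by rw [← h]; rfl

/-- coefficient of `X^k` (no `Y`) in `F^m` -/
lemma coeff_pow_single0 {F : MvPowerSeries (Fin 2) R} (hF : IsFGL F) :
    ∀ m k, MvPowerSeries.coeff (single 0 k : Fin 2 →₀ ℕ) (F ^ m)
      = if k = m then 1 else 0 := by
  intro m
  induction m with
  | zero =>
    intro k
    rw [pow_zero, MvPowerSeries.coeff_one]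
    simp [Finsupp.single_eq_zero]
  | succ m ih =>
    intro k
    rw [pow_succ, MvPowerSeries.coeff_mul]
    by_cases hk : k = m + 1
    · subst hk
      rw [Finset.sum_eq_single ((single 0 m : Fin 2 →₀ ℕ), (single 0 1 : Fin 2 →₀ ℕ))]
      · rw [ih, coeff_single0_F hF, if_pos rfl, if_pos rfl, one_mul, if_pos rfl]
      · intro uv huv hne
        rw [Finset.HasAntidiagonal.mem_antidiagonal] at huv
        have h1 : uv.1 1 = 0 ∧ uv.2 1 = 0 := by
          have := antidiag_apply huv 1
          rw [Finsupp.single_apply] at this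
          norm_num at this
          omega
        have e1 : uv.1 = single 0 (uv.1 0) := eq_single0 h1.1
        have e2 : uv.2 = single 0 (uv.2 0) := eq_single0 h1.2
        rw [e1, ih]
        by_cases hm : uv.1 0 = m
        · rw [e2, coeff_single0_F hF]
          by_cases h2 : uv.2 0 = 1
          · exfalso
            apply hne
            rw [Prod.ext_iff, e1, e2, hm, h2]
            exact ⟨rfl, rfl⟩
          · rw [if_neg h2, mul_zero]
        · rw [if_neg hm, zero_mul]
      · intro hmem
        exfalso
        apply hmem
        rw [Finset.HasAntidiagonal.mem_antidiagonal, ← Finsupp.single_add]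
    · rw [if_neg hk]
      refine Finset.sum_eq_zero fun uv huv => ?_
      rw [Finset.HasAntidiagonal.mem_antidiagonal] at huv
      have h1 : uv.1 1 = 0 ∧ uv.2 1 = 0 := by
        have := antidiag_apply huv 1
        rw [Finsupp.single_apply] at this
        norm_num at this
        omega
      have h0 := antidiag_apply huv 0
      rw [Finsupp.single_eq_same] at h0
      rw [eq_single0 h1.1, ih]
      by_cases hm : uv.1 0 = m
      · rw [eq_single0 h1.2, coeff_single0_F hF]
        by_cases h2 : uv.2 0 = 1
        · exfalso; apply hk; omega
        · rw [if_neg h2, mul_zero]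
      · rw [if_neg hm, zero_mul]

/-- coefficient of `X^n Y` in `F^(m+1)` -/
lemma coeff_pow_Ypart {F : MvPowerSeries (Fin 2) R} (hF : IsFGL F) :
    ∀ m n, m ≤ n →
      MvPowerSeries.coeff (single 0 n + single 1 1 : Fin 2 →₀ ℕ) (F ^ (m + 1))
        = ((m + 1 : ℕ) : R) *
          MvPowerSeries.coeff (single 0 (n - m) + single 1 1 : Fin 2 →₀ ℕ) F := by
  intro m
  induction m with
  | zero => intro n _; simp
  | succ m ih =>
    intro n hn
    have hd0 : (single 0 n + single 1 1 : Fin 2 →₀ ℕ) 0 = n := (single01 n 1).1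
    have hd1 : (single 0 n + single 1 1 : Fin 2 →₀ ℕ) 1 = 1 := (single01 n 1).2
    have hQ : ((single 0 (n-1) + single 1 1 : Fin 2 →₀ ℕ), (single 0 1 : Fin 2 →₀ ℕ))
        ∈ Finset.HasAntidiagonal.antidiagonal (single 0 n + single 1 1 : Fin 2 →₀ ℕ) := by
      rw [Finset.HasAntidiagonal.mem_antidiagonal]
      apply fin2_ext
      · rw [Finsupp.add_apply, (single01 (n-1) 1).1, Finsupp.single_eq_same, hd0]; omega
      · rw [Finsupp.add_apply, (single01 (n-1) 1).2, hd1,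
          Finsupp.single_apply, if_neg (by decide)]
        omega
    rw [pow_succ, MvPowerSeries.coeff_mul, ← Finset.sum_erase_add _ _ hQ]
    have hPQ : ((single 0 (m+1) : Fin 2 →₀ ℕ), (single 0 (n-m-1) + single 1 1 : Fin 2 →₀ ℕ))
        ≠ ((single 0 (n-1) + single 1 1 : Fin 2 →₀ ℕ), (single 0 1 : Fin 2 →₀ ℕ)) := by
      intro hc
      have := congrArg (fun q => q.2 1) hc
      simp only at this
      rw [(single01 (n-m-1) 1).2, Finsupp.single_apply, if_neg (by decide)] at this
      exact one_ne_zero this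
    have hPmem : ((single 0 (m+1) : Fin 2 →₀ ℕ), (single 0 (n-m-1) + single 1 1 : Fin 2 →₀ ℕ))
        ∈ Finset.HasAntidiagonal.antidiagonal (single 0 n + single 1 1 : Fin 2 →₀ ℕ) := by
      rw [Finset.HasAntidiagonal.mem_antidiagonal]
      apply fin2_ext
      · rw [Finsupp.add_apply, Finsupp.single_eq_same, (single01 (n-m-1) 1).1, hd0]; omega
      · rw [Finsupp.add_apply, (single01 (n-m-1) 1).2, hd1,
          Finsupp.single_apply, if_neg (by decide)]
    have hsum1 : ∑ uv ∈ (Finset.HasAntidiagonal.antidiagonal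
          (single 0 n + single 1 1 : Fin 2 →₀ ℕ)).erase
          ((single 0 (n-1) + single 1 1 : Fin 2 →₀ ℕ), (single 0 1 : Fin 2 →₀ ℕ)),
        MvPowerSeries.coeff uv.1 (F ^ (m+1)) * MvPowerSeries.coeff uv.2 F
        = MvPowerSeries.coeff (single 0 (n-m-1) + single 1 1 : Fin 2 →₀ ℕ) F := by
      rw [Finset.sum_eq_single_of_mem _ (Finset.mem_erase.mpr ⟨hPQ, hPmem⟩)]
      · rw [coeff_pow_single0 hF, if_pos rfl, one_mul]
      · intro uv huv hne
        have huv' := Finset.mem_of_mem_erase huv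
        have hneQ := (Finset.mem_erase.mp huv).1
        rw [Finset.HasAntidiagonal.mem_antidiagonal] at huv'
        have h0 := antidiag_apply huv' 0
        have h1 := antidiag_apply huv' 1
        rw [hd0] at h0
        rw [hd1] at h1
        rcases Nat.le_one_iff_eq_zero_or_eq_one.mp (show uv.2 1 ≤ 1 by omega) with h2 | h2
        · -- uv.2 has no Y: uv.2 = single 0 (uv.2 0), uv.1 1 = 1
          rw [eq_single0 h2, coeff_single0_F hF]
          by_cases h3 : uv.2 0 = 1
          · exfalso
            apply hneQ
            have hu1 : uv.1 1 = 1 := by omega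
            have hu0 : uv.1 0 = n - 1 := by omega
            rw [Prod.ext_iff]
            constructor
            · rw [fin2_eq uv.1, hu0, hu1]
            · rw [eq_single0 h2, h3]
          · rw [if_neg h3, mul_zero]
        · -- uv.2 1 = 1, so uv.1 1 = 0
          have hu1 : uv.1 1 = 0 := by omega
          rw [eq_single0 hu1, coeff_pow_single0 hF]
          by_cases h3 : uv.1 0 = m + 1
          · exfalso
            apply hne
            have hv0 : uv.2 0 = n - m - 1 := by omega
            rw [Prod.ext_iff]
            constructor
            · rw [eq_single0 hu1, h3]
            · rw [fin2_eq uv.2, hv0, h2]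
          · rw [if_neg h3, zero_mul]
    rw [hsum1, ih (n-1) (by omega)]
    have hc : n - 1 - m = n - (m + 1) := by omega
    have hc2 : n - m - 1 = n - (m + 1) := by omega
    rw [hc, hc2, coeff_single0_F hF, if_pos rfl, mul_one]
    push_cast
    ring

lemma pow_supp {σ : Type*} (t : σ) {a : MvPowerSeries σ R}
    (h : ∀ d, d t ≠ 0 → a d = 0) :
    ∀ (i : ℕ) (d : σ →₀ ℕ), d t ≠ 0 → MvPowerSeries.coeff d (a ^ i) = 0 := by
  classical
  intro i
  induction i with
  | zero =>
    intro d hd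
    rw [pow_zero, MvPowerSeries.coeff_one, if_neg, ]
    intro hc; apply hd; rw [hc]; rfl
  | succ i ih =>
    intro d hd
    rw [pow_succ, MvPowerSeries.coeff_mul]
    refine Finset.sum_eq_zero fun uv huv => ?_
    rw [Finset.HasAntidiagonal.mem_antidiagonal] at huv
    have : uv.1 t + uv.2 t = d t := by rw [← huv]; rfl
    by_cases h1 : uv.1 t = 0
    · have h2 : uv.2 t ≠ 0 := by omega
      rw [coeff_eq uv.2 a, h uv.2 h2, mul_zero]
    · rw [ih uv.1 h1, zero_mul]

section Vanishing

variable {F G : MvPowerSeries (Fin 2) R} {f : PowerSeries R}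

lemma subst1X_supp (f : PowerSeries R) :
    ∀ d : Fin 2 →₀ ℕ, d 1 ≠ 0 → (subst1 f (MvPowerSeries.X 0) : MvPowerSeries (Fin 2) R) d = 0 := by
  intro d hd
  rw [subst1_X]
  rw [if_neg]
  intro hc
  apply hd
  rw [hc, Finsupp.single_apply, if_neg (by decide)]

lemma subst1Y_supp (f : PowerSeries R) :
    ∀ d : Fin 2 →₀ ℕ, d 0 ≠ 0 → (subst1 f (MvPowerSeries.X 1) : MvPowerSeries (Fin 2) R) d = 0 := by
  intro d hd
  rw [subst1_X]
  rw [if_neg]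
  intro hc
  apply hd
  rw [hc, Finsupp.single_apply, if_neg (by decide)]

lemma subst1X_const (f : PowerSeries R) (s : Fin 2) :
    (subst1 f (MvPowerSeries.X s) : MvPowerSeries (Fin 2) R) 0
      = PowerSeries.constantCoeff f := by
  rw [subst1_X]
  simp [PowerSeries.coeff_zero_eq_constantCoeff]

lemma rhs_Ypart_zero (hfc : PowerSeries.constantCoeff f = 0)
    (hf1 : PowerSeries.coeff 1 f = 0) (n : ℕ) :
    (subst2 G (subst1 f (MvPowerSeries.X 0)) (subst1 f (MvPowerSeries.X 1)))
      (single 0 n + single 1 1 : Fin 2 →₀ ℕ) = 0 := by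
  rw [subst2_apply]
  refine Finset.sum_eq_zero fun ij _ => ?_
  obtain ⟨i, j⟩ := ij
  rw [MvPowerSeries.coeff_mul]
  rw [Finset.sum_eq_zero, mul_zero]
  intro uv huv
  rw [Finset.HasAntidiagonal.mem_antidiagonal] at huv
  have h0 := antidiag_apply huv 0
  have h1 := antidiag_apply huv 1
  rw [(single01 n 1).1] at h0
  rw [(single01 n 1).2] at h1
  by_cases hu1 : uv.1 1 = 0
  case neg =>
    rw [pow_supp 1 (subst1X_supp f) i uv.1 hu1, zero_mul]
  by_cases hv0 : uv.2 0 = 0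
  case neg =>
    rw [pow_supp 0 (subst1Y_supp f) j uv.2 hv0, mul_zero]
  -- uv.2 = single 1 1
  have hv : uv.2 = single 1 1 := by
    apply fin2_ext
    · rw [hv0, Finsupp.single_apply, if_neg (by decide)]
    · rw [Finsupp.single_eq_same]; omega
  rcases j with _ | _ | j
  · rw [pow_zero, MvPowerSeries.coeff_one, if_neg, mul_zero]
    rw [hv]
    intro hc
    exact one_ne_zero (Finsupp.single_eq_zero.mp hc)
  · rw [pow_one, hv, coeff_eq _ (subst1 f (MvPowerSeries.X 1)), subst1_X,
      Finsupp.single_eq_same, if_pos rfl, hf1, mul_zero]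
  · rw [coeff_pow_zero (a := (subst1 f (MvPowerSeries.X 1) : MvPowerSeries (Fin 2) R)) (by
        rw [show (subst1 f (MvPowerSeries.X 1) : MvPowerSeries (Fin 2) R) 0
            = PowerSeries.constantCoeff f from subst1X_const f 1]; exact hfc), mul_zero]
    rw [hv, fin2_sum, Finsupp.single_apply, if_neg (by decide), Finsupp.single_eq_same]
    omega

/-- all coefficients of `f` are killed by their index -/
lemma linear_vanish (hF : IsFGL F) (hf : IsHom F G f)
    (hf1 : PowerSeries.coeff 1 f = 0) :
    ∀ m : ℕ, ((m : ℕ) : R) * PowerSeries.coeff m f = 0 := by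
  intro m
  induction m using Nat.strong_induction_on with
  | _ m IH =>
    match m with
    | 0 => simp
    | M + 1 =>
      have h := congrFun hf.hom (single 0 M + single 1 1 : Fin 2 →₀ ℕ)
      rw [rhs_Ypart_zero hf.const hf1 M, subst1_apply, sum_single01] at h
      rw [Finset.sum_eq_single (M+1)] at h
      · rw [coeff_pow_Ypart hF M M le_rfl, Nat.sub_self, Finsupp.single_zero, zero_add,
          coeff_single1_F hF, if_pos rfl, mul_one] at h
        rw [← h]; ring
      · intro m hm hne
        rw [Finset.mem_range] at hm
        match m with
        | 0 =>
          rw [pow_zero, MvPowerSeries.coeff_one, if_neg, mul_zero]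
          intro hc
          have h2 := (single01 M 1).2
          rw [hc] at h2
          simp at h2
        | k + 1 =>
          have hk : k ≤ M := by omega
          rw [coeff_pow_Ypart hF k M hk]
          have hIH := IH (k+1) (by omega)
          calc PowerSeries.coeff (k+1) f * (((k+1:ℕ):R) *
                MvPowerSeries.coeff (single 0 (M-k) + single 1 1 : Fin 2 →₀ ℕ) F)
              = (((k+1:ℕ):R) * PowerSeries.coeff (k+1) f) *
                MvPowerSeries.coeff (single 0 (M-k) + single 1 1 : Fin 2 →₀ ℕ) F := by ring
            _ = 0 := by rw [hIH, zero_mul]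
      · intro hmem
        exact absurd (Finset.mem_range.mpr (by omega)) hmem

lemma coeff_not_dvd_zero {p : ℕ} (hp : p.Prime) (hpR : (p : R) = 0)
    (hF : IsFGL F) (hf : IsHom F G f) (hf1 : PowerSeries.coeff 1 f = 0)
    {m : ℕ} (hm : ¬ p ∣ m) : PowerSeries.coeff m f = 0 := by
  have hcop : Nat.gcd m p = 1 := Nat.Coprime.gcd_eq_one
    (Nat.Coprime.symm (hp.coprime_iff_not_dvd.mpr hm))
  have hic : IsCoprime (m : ℤ) (p : ℤ) := by
    rw [Int.isCoprime_iff_gcd_eq_one, Int.gcd_natCast_natCast]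
    exact hcop
  obtain ⟨u, v, huv⟩ := hic
  have hcast : (u : ℤ → ℤ) = u := rfl
  have h1 : ((u * m + v * p : ℤ) : R) = 1 := by rw [huv]; exact Int.cast_one
  push_cast at h1
  rw [hpR, mul_zero, add_zero] at h1
  calc PowerSeries.coeff m f = 1 * PowerSeries.coeff m f := (one_mul _).symm
    _ = (u : R) * (((m:ℕ):R) * PowerSeries.coeff m f) := by rw [← h1]; ring
    _ = 0 := by rw [linear_vanish hF hf hf1, mul_zero]

end Vanishing



section Scale

lemma sum_extend {α β M : Type*} [AddCommMonoid M] [DecidableEq α] [DecidableEq β]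
    (s : Finset α) (t : Finset β) (φ : α → β) (g : β → M)
    (hinj : ∀ a ∈ s, ∀ a' ∈ s, φ a = φ a' → a = a')
    (hsub : ∀ a ∈ s, φ a ∈ t)
    (hvan : ∀ b ∈ t, b ∉ s.image φ → g b = 0) :
    ∑ b ∈ t, g b = ∑ a ∈ s, g (φ a) := by
  rw [← Finset.sum_image hinj]
  exact (Finset.sum_subset (Finset.image_subset_iff.mpr hsub) hvan).symm

variable (p : ℕ)

/-- divide a two-variable exponent by `p` componentwise -/
noncomputable def pdiv (d : Fin 2 →₀ ℕ) : Fin 2 →₀ ℕ :=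
  single 0 (d 0 / p) + single 1 (d 1 / p)

/-- scale all exponents of `A` by `p` -/
noncomputable def sc (A : MvPowerSeries (Fin 2) R) : MvPowerSeries (Fin 2) R :=
  fun d => if p ∣ d 0 ∧ p ∣ d 1 then A (pdiv p d) else 0

variable {p}

lemma smul_apply2 (d : Fin 2 →₀ ℕ) (i : Fin 2) : (p • d) i = p * d i := rfl

lemma smul_inj (hp : 0 < p) {u v : Fin 2 →₀ ℕ} (h : p • u = p • v) : u = v := by
  apply fin2_ext
  · have := congrArg (fun q : Fin 2 →₀ ℕ => q 0) h
    simp only [smul_apply2] at this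
    exact Nat.eq_of_mul_eq_mul_left hp this
  · have := congrArg (fun q : Fin 2 →₀ ℕ => q 1) h
    simp only [smul_apply2] at this
    exact Nat.eq_of_mul_eq_mul_left hp this

lemma pdiv_smul (hp : 0 < p) (d : Fin 2 →₀ ℕ) : pdiv p (p • d) = d := by
  apply fin2_ext
  · rw [pdiv, (single01 _ _).1, smul_apply2, Nat.mul_div_cancel_left _ hp]
  · rw [pdiv, (single01 _ _).2, smul_apply2, Nat.mul_div_cancel_left _ hp]

lemma smul_pdiv {d : Fin 2 →₀ ℕ} (h : p ∣ d 0 ∧ p ∣ d 1) : p • pdiv p d = d := by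
  apply fin2_ext
  · rw [smul_apply2, pdiv, (single01 _ _).1, Nat.mul_div_cancel' h.1]
  · rw [smul_apply2, pdiv, (single01 _ _).2, Nat.mul_div_cancel' h.2]

lemma sc_smul (hp : 0 < p) (A : MvPowerSeries (Fin 2) R) (d : Fin 2 →₀ ℕ) :
    sc p A (p • d) = A d := by
  rw [sc, if_pos ⟨⟨d 0, rfl⟩, ⟨d 1, rfl⟩⟩, pdiv_smul hp]

lemma sc_zero_of (A : MvPowerSeries (Fin 2) R) {d : Fin 2 →₀ ℕ}
    (h : ¬ (p ∣ d 0 ∧ p ∣ d 1)) : sc p A d = 0 := if_neg h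

lemma sc_one (hp : 0 < p) : sc p (1 : MvPowerSeries (Fin 2) R) = 1 := by
  funext d
  by_cases h : p ∣ d 0 ∧ p ∣ d 1
  · rw [sc, if_pos h]
    rw [show ((1 : MvPowerSeries (Fin 2) R) (pdiv p d)) =
      (if pdiv p d = 0 then 1 else 0) from MvPowerSeries.coeff_one _,
      show ((1 : MvPowerSeries (Fin 2) R) d) = (if d = 0 then 1 else 0) from
        MvPowerSeries.coeff_one _]
    congr 1
    rw [eq_iff_iff]
    constructor
    · intro h0
      have := congrArg (p • ·) h0
      simp only [smul_zero] at this
      rw [smul_pdiv h] at this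
      exact this
    · intro h0
      rw [h0]
      apply fin2_ext <;> simp [pdiv]
  · rw [sc_zero_of _ h,
      show ((1 : MvPowerSeries (Fin 2) R) d) = (if d = 0 then 1 else 0) from
        MvPowerSeries.coeff_one _, if_neg]
    intro h0
    rw [h0] at h
    exact h ⟨by simp, by simp⟩

lemma sc_mul (hp : 0 < p) (A B : MvPowerSeries (Fin 2) R) :
    sc p (A * B) = sc p A * sc p B := by
  funext e
  rw [show ((sc p A * sc p B) e) = MvPowerSeries.coeff e (sc p A * sc p B) from rfl,
    MvPowerSeries.coeff_mul]
  by_cases h : p ∣ e 0 ∧ p ∣ e 1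
  · rw [sc, if_pos h,
      show ((A * B) (pdiv p e)) = MvPowerSeries.coeff (pdiv p e) (A * B) from rfl,
      MvPowerSeries.coeff_mul]
    rw [sum_extend (Finset.HasAntidiagonal.antidiagonal (pdiv p e)) (Finset.HasAntidiagonal.antidiagonal e)
      (fun ab => (p • ab.1, p • ab.2))
      (fun uv => MvPowerSeries.coeff uv.1 (sc p A) * MvPowerSeries.coeff uv.2 (sc p B))]
    · apply Finset.sum_congr rfl
      intro ab _
      dsimp only
      rw [coeff_eq _ (sc p A), coeff_eq _ (sc p B), sc_smul hp, sc_smul hp]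
      rfl
    · intro a _ a' _ hphi
      have h1 := congrArg Prod.fst hphi
      have h2 := congrArg Prod.snd hphi
      simp only at h1 h2
      exact Prod.ext (smul_inj hp h1) (smul_inj hp h2)
    · intro ab hab
      rw [Finset.HasAntidiagonal.mem_antidiagonal] at hab ⊢
      rw [← smul_add, hab, smul_pdiv h]
    · intro uv huv hnotim
      rw [Finset.HasAntidiagonal.mem_antidiagonal] at huv
      by_cases h1 : p ∣ uv.1 0 ∧ p ∣ uv.1 1
      · by_cases h2 : p ∣ uv.2 0 ∧ p ∣ uv.2 1
        · exfalso
          apply hnotim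
          rw [Finset.mem_image]
          refine ⟨(pdiv p uv.1, pdiv p uv.2), ?_, ?_⟩
          · rw [Finset.HasAntidiagonal.mem_antidiagonal]
            apply smul_inj hp
            rw [smul_add, smul_pdiv h1, smul_pdiv h2, huv, smul_pdiv h]
          · exact Prod.ext (smul_pdiv h1) (smul_pdiv h2)
        · rw [coeff_eq uv.2 (sc p B), sc_zero_of _ h2, mul_zero]
      · rw [coeff_eq uv.1 (sc p A), sc_zero_of _ h1, zero_mul]
  · rw [sc_zero_of _ h]
    symm
    refine Finset.sum_eq_zero fun uv huv => ?_
    rw [Finset.HasAntidiagonal.mem_antidiagonal] at huv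
    by_cases h1 : p ∣ uv.1 0 ∧ p ∣ uv.1 1
    · by_cases h2 : p ∣ uv.2 0 ∧ p ∣ uv.2 1
      · exfalso
        apply h
        have e0 := antidiag_apply huv 0
        have e1 := antidiag_apply huv 1
        constructor
        · rw [← e0]; exact Nat.dvd_add h1.1 h2.1
        · rw [← e1]; exact Nat.dvd_add h1.2 h2.2
      · rw [coeff_eq uv.2 (sc p B), sc_zero_of _ h2, mul_zero]
    · rw [coeff_eq uv.1 (sc p A), sc_zero_of _ h1, zero_mul]

lemma sc_pow (hp : 0 < p) (A : MvPowerSeries (Fin 2) R) (k : ℕ) :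
    sc p (A ^ k) = (sc p A) ^ k := by
  induction k with
  | zero => rw [pow_zero, pow_zero, sc_one hp]
  | succ k ih => rw [pow_succ, pow_succ, sc_mul hp, ih]

lemma monomial_pow2 (d : Fin 2 →₀ ℕ) (r : R) (k : ℕ) :
    (MvPowerSeries.monomial d r) ^ k = MvPowerSeries.monomial (k • d) (r ^ k) := by
  induction k with
  | zero => rw [pow_zero, pow_zero, zero_smul, MvPowerSeries.monomial_zero_one]
  | succ k ih =>
    rw [pow_succ, ih, MvPowerSeries.monomial_mul_monomial, succ_nsmul, pow_succ]

/-- the Frobenius: in characteristic `p`, `A ^ p` is the coefficientwise Frobenius with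
exponents scaled by `p`. -/
lemma pow_p_eq_sc (hp : p.Prime) [Fact p.Prime] [CharP R p] (A : MvPowerSeries (Fin 2) R) :
    A ^ p = sc p (fun d => (A d) ^ p) := by
  haveI : CharP (MvPowerSeries (Fin 2) R) p := ⟨fun n => by
    rw [← CharP.cast_eq_zero_iff R p n]
    constructor
    · intro h
      have := congrArg (MvPowerSeries.constantCoeff) h
      rwa [map_natCast, map_zero] at this
    · intro h
      rw [show ((n : ℕ) : MvPowerSeries (Fin 2) R) = MvPowerSeries.C (n : R) from
        (map_natCast (MvPowerSeries.C) n).symm, h, map_zero]⟩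
  funext e
  set N := max (e 0) (e 1) with hN
  set S : Finset (Fin 2 →₀ ℕ) := (Finset.range (N+1) ×ˢ Finset.range (N+1)).image
    (fun ij => single 0 ij.1 + single 1 ij.2) with hS
  have hmemS : ∀ d : Fin 2 →₀ ℕ, d 0 ≤ N → d 1 ≤ N → d ∈ S := by
    intro d h0 h1
    rw [hS, Finset.mem_image]
    exact ⟨(d 0, d 1), Finset.mem_product.mpr
      ⟨Finset.mem_range.mpr (by omega), Finset.mem_range.mpr (by omega)⟩, (fin2_eq d).symm⟩
  set T : MvPowerSeries (Fin 2) R := ∑ d ∈ S, MvPowerSeries.monomial d (A d) with hT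
  set L : MvPowerSeries (Fin 2) R := A - T with hL
  have hTcoeff : ∀ d : Fin 2 →₀ ℕ, d 0 ≤ N → d 1 ≤ N →
      MvPowerSeries.coeff d T = A d := by
    intro d h0 h1
    rw [hT, map_sum]
    rw [Finset.sum_eq_single_of_mem d (hmemS d h0 h1)]
    · rw [MvPowerSeries.coeff_monomial, if_pos rfl]
    · intro b _ hb
      rw [MvPowerSeries.coeff_monomial, if_neg (Ne.symm hb)]
  have hLcoeff : ∀ d : Fin 2 →₀ ℕ, d 0 ≤ N → d 1 ≤ N →
      MvPowerSeries.coeff d L = 0 := by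
    intro d h0 h1
    rw [hL, map_sub, hTcoeff d h0 h1, coeff_eq, sub_self]
  have hAe : A = T + L := by rw [hL, add_sub_cancel]
  have hLp : MvPowerSeries.coeff e (L ^ p) = 0 := by
    have hps : L ^ p = L ^ (p - 1) * L := by
      rw [← pow_succ, Nat.sub_add_cancel hp.one_le]
    rw [hps, MvPowerSeries.coeff_mul]
    refine Finset.sum_eq_zero fun uv huv => ?_
    rw [Finset.HasAntidiagonal.mem_antidiagonal] at huv
    have e0 := antidiag_apply huv 0
    have e1 := antidiag_apply huv 1
    rw [hLcoeff uv.2 (by omega) (by omega), mul_zero]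
  have hTp : (T : MvPowerSeries (Fin 2) R) ^ p
      = ∑ d ∈ S, MvPowerSeries.monomial (p • d) ((A d) ^ p) := by
    rw [hT, sum_pow_char]
    apply Finset.sum_congr rfl
    intro d _
    rw [monomial_pow2]
  have hsplit : A ^ p = T ^ p + L ^ p := by
    conv_lhs => rw [hAe]
    rw [add_pow_char]
  have key : MvPowerSeries.coeff e (A ^ p)
      = ∑ d ∈ S, MvPowerSeries.coeff e (MvPowerSeries.monomial (p • d) ((A d) ^ p)) := by
    rw [hsplit, map_add, hLp, add_zero, hTp, map_sum]
  rw [← coeff_eq e (A ^ p), key]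
  by_cases h : p ∣ e 0 ∧ p ∣ e 1
  · refine Eq.trans ?_ (if_pos h : sc p (fun d => A d ^ p) e = A (pdiv p e) ^ p).symm
    rw [Finset.sum_eq_single_of_mem (pdiv p e)
      (hmemS _ (by rw [pdiv, (single01 _ _).1]
                   exact le_trans (Nat.div_le_self _ _) (le_max_left _ _))
        (by rw [pdiv, (single01 _ _).2]
            exact le_trans (Nat.div_le_self _ _) (le_max_right _ _)))]
    · rw [MvPowerSeries.coeff_monomial, if_pos (smul_pdiv h).symm]
    · intro b _ hb
      rw [MvPowerSeries.coeff_monomial, if_neg]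
      intro hc
      apply hb
      apply smul_inj hp.pos
      rw [← hc, smul_pdiv h]
  · refine Eq.trans ?_ (sc_zero_of (fun d => A d ^ p) h).symm
    refine Finset.sum_eq_zero fun d _ => ?_
    rw [MvPowerSeries.coeff_monomial, if_neg]
    intro hc
    apply h
    rw [hc]
    exact ⟨⟨d 0, rfl⟩, ⟨d 1, rfl⟩⟩

end Scale

lemma sum_mul_reindex {M : Type*} [AddCommMonoid M] {p : ℕ} (hp : 0 < p) (s : ℕ) (h : ℕ → M)
    (hvan : ∀ m, ¬ p ∣ m → h m = 0) :
    ∑ m ∈ Finset.range (p * s + 1), h m = ∑ k ∈ Finset.range (s + 1), h (p * k) := by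
  rw [sum_extend (Finset.range (s+1)) (Finset.range (p*s+1)) (fun k => p * k) h]
  · intro a _ a' _ hphi
    exact Nat.eq_of_mul_eq_mul_left hp hphi
  · intro a ha
    rw [Finset.mem_range] at ha ⊢
    have : p * a ≤ p * s := Nat.mul_le_mul_left p (by omega)
    omega
  · intro m hm hnotim
    by_cases hdvd : p ∣ m
    · exfalso
      obtain ⟨k, rfl⟩ := hdvd
      apply hnotim
      rw [Finset.mem_image]
      refine ⟨k, Finset.mem_range.mpr ?_, rfl⟩
      rw [Finset.mem_range] at hm
      have : k ≤ p * k := Nat.le_mul_of_pos_left k hp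
      have : p * k ≤ p * s := by omega
      exact Nat.lt_succ_of_le (Nat.le_of_mul_le_mul_left this hp)
    · exact hvan m hdvd



lemma pcoeff_eq (n : ℕ) (A : PowerSeries R) :
    MvPowerSeries.coeff (single () n) A = PowerSeries.coeff n A := rfl

lemma usum (n : ℕ) : ((single () n : Unit →₀ ℕ).sum fun _ k => k) = n :=
  Finsupp.sum_single_index rfl

lemma pcomp_Xpow_coeff {p : ℕ} (hp : 0 < p) (g' : PowerSeries R) (n : ℕ) :
    PowerSeries.coeff n (pcomp g' (PowerSeries.X ^ p))
      = if p ∣ n then PowerSeries.coeff (n / p) g' else 0 := by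
  rw [← pcoeff_eq, coeff_eq, pcomp, subst1_apply, usum]
  have hterm : ∀ m, MvPowerSeries.coeff (single () n) ((PowerSeries.X ^ p) ^ m)
      = if n = p * m then (1:R) else 0 := by
    intro m
    rw [← pow_mul, pcoeff_eq, PowerSeries.coeff_X_pow]
  by_cases h : p ∣ n
  · obtain ⟨k, rfl⟩ := h
    rw [if_pos ⟨k, rfl⟩]
    rw [Finset.sum_eq_single k]
    · rw [hterm, if_pos rfl, mul_one, Nat.mul_div_cancel_left k hp]
    · intro m _ hm
      rw [hterm, if_neg, mul_zero]
      intro hc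
      exact hm (Nat.eq_of_mul_eq_mul_left hp hc.symm)
    · intro hmem
      refine absurd (Finset.mem_range.mpr ?_) hmem
      have : k ≤ p * k := Nat.le_mul_of_pos_left k hp
      omega
  · rw [if_neg h]
    refine Finset.sum_eq_zero fun m _ => ?_
    rw [hterm, if_neg, mul_zero]
    intro hc
    exact h ⟨m, hc⟩

lemma pdiv_apply0 {p : ℕ} (d : Fin 2 →₀ ℕ) : (pdiv p d) 0 = d 0 / p := by
  rw [pdiv]; exact (single01 _ _).1

lemma pdiv_apply1 {p : ℕ} (d : Fin 2 →₀ ℕ) : (pdiv p d) 1 = d 1 / p := by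
  rw [pdiv]; exact (single01 _ _).2

lemma subst1_sc0 {p : ℕ} (hp : 0 < p) (f g : PowerSeries R)
    (hg : ∀ k, PowerSeries.coeff k g = PowerSeries.coeff (p * k) f)
    (hap : ∀ m, ¬ p ∣ m → PowerSeries.coeff m f = 0) :
    (subst1 f (MvPowerSeries.X 0) : MvPowerSeries (Fin 2) R)
      = sc p (subst1 g (MvPowerSeries.X 0)) := by
  funext d
  rw [subst1_X]
  by_cases hdvd : p ∣ d 0 ∧ p ∣ d 1
  · rw [sc, if_pos hdvd, subst1_X]
    by_cases hd1 : d 1 = 0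
    · rw [if_pos (eq_single0 hd1), if_pos (eq_single0 (by rw [pdiv_apply1, hd1, Nat.zero_div])),
        pdiv_apply0, hg, Nat.mul_div_cancel' hdvd.1]
    · rw [if_neg, if_neg]
      · intro hc
        apply hd1
        obtain ⟨c, hc'⟩ := hdvd.2
        have h2 : (pdiv p d) 1 = 0 := by
          rw [hc, Finsupp.single_apply, if_neg (by decide)]
        rw [pdiv_apply1, hc', Nat.mul_div_cancel_left c hp] at h2
        rw [hc', h2, mul_zero]
      · intro hc
        apply hd1
        rw [hc, Finsupp.single_apply, if_neg (by decide)]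
  · rw [sc_zero_of _ hdvd]
    by_cases hc : d = single 0 (d 0)
    · rw [if_pos hc]
      apply hap
      intro hdvd0
      apply hdvd
      refine ⟨hdvd0, ?_⟩
      rw [hc, Finsupp.single_apply, if_neg (by decide)]
      exact dvd_zero p
    · rw [if_neg hc]

lemma subst1_sc1 {p : ℕ} (hp : 0 < p) (f g : PowerSeries R)
    (hg : ∀ k, PowerSeries.coeff k g = PowerSeries.coeff (p * k) f)
    (hap : ∀ m, ¬ p ∣ m → PowerSeries.coeff m f = 0) :
    (subst1 f (MvPowerSeries.X 1) : MvPowerSeries (Fin 2) R)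
      = sc p (subst1 g (MvPowerSeries.X 1)) := by
  funext d
  rw [subst1_X]
  by_cases hdvd : p ∣ d 0 ∧ p ∣ d 1
  · rw [sc, if_pos hdvd, subst1_X]
    by_cases hd0 : d 0 = 0
    · rw [if_pos (eq_single1 hd0), if_pos (eq_single1 (by rw [pdiv_apply0, hd0, Nat.zero_div])),
        pdiv_apply1, hg, Nat.mul_div_cancel' hdvd.2]
    · rw [if_neg, if_neg]
      · intro hc
        apply hd0
        obtain ⟨c, hc'⟩ := hdvd.1
        have h2 : (pdiv p d) 0 = 0 := by
          rw [hc, Finsupp.single_apply, if_neg (by decide)]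
        rw [pdiv_apply0, hc', Nat.mul_div_cancel_left c hp] at h2
        rw [hc', h2, mul_zero]
      · intro hc
        apply hd0
        rw [hc, Finsupp.single_apply, if_neg (by decide)]
  · rw [sc_zero_of _ hdvd]
    by_cases hc : d = single 1 (d 1)
    · rw [if_pos hc]
      apply hap
      intro hdvd1
      apply hdvd
      refine ⟨?_, hdvd1⟩
      rw [hc, Finsupp.single_apply, if_neg (by decide)]
      exact dvd_zero p
    · rw [if_neg hc]

lemma smul_sum (p : ℕ) (d : Fin 2 →₀ ℕ) :
    ((p • d : Fin 2 →₀ ℕ).sum fun _ k => k) = p * (d.sum fun _ k => k) := by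
  rw [fin2_sum, fin2_sum, smul_apply2, smul_apply2, mul_add]


/-- Let `p` be a prime and `R` a commutative ring with `p·1 = 0`.  If `f : F → G` is a
homomorphism of formal group laws over `R` whose linear coefficient vanishes, then there is a
unique power series `g` with zero constant term such that `f(T) = g(T^p)`, and this `g` is a
homomorphism of formal group laws `F^{(p)} → G`. -/
theorem statement0 (p : ℕ) (hp : p.Prime) (R : Type*) [CommRing R] (hpR : (p : R) = 0)
    (F G : MvPowerSeries (Fin 2) R) (hF : IsFGL F) (hG : IsFGL G)
    (f : PowerSeries R) (hf : IsHom F G f) (hf1 : PowerSeries.coeff 1 f = 0) :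
    ∃ g : PowerSeries R,
      (PowerSeries.constantCoeff g = 0 ∧ f = pcomp g (PowerSeries.X ^ p) ∧
        IsHom (frob p F) G g) ∧
      ∀ g' : PowerSeries R,
        PowerSeries.constantCoeff g' = 0 → f = pcomp g' (PowerSeries.X ^ p) → g' = g := by
  by_cases htriv : Subsingleton R
  · exact ⟨0, ⟨map_zero _, funext fun d => Subsingleton.elim _ _,
      ⟨map_zero _, funext fun d => Subsingleton.elim _ _⟩⟩,
      fun g' _ _ => funext fun d => Subsingleton.elim _ _⟩
  haveI : Nontrivial R := not_subsingleton_iff_nontrivial.mp htriv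
  haveI : Fact p.Prime := ⟨hp⟩
  haveI : CharP R p := (CharP.charP_iff_prime_eq_zero hp).mpr hpR
  have hap : ∀ m, ¬ p ∣ m → PowerSeries.coeff m f = 0 := fun m hm =>
    coeff_not_dvd_zero hp hpR hF hf hf1 hm
  set g : PowerSeries R := PowerSeries.mk (fun k => PowerSeries.coeff (p * k) f) with hgdef
  have hgk : ∀ k, PowerSeries.coeff k g = PowerSeries.coeff (p * k) f := fun k =>
    PowerSeries.coeff_mk _ _
  have hgc : PowerSeries.constantCoeff g = 0 := by
    have h0 := hgk 0
    rw [mul_zero] at h0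
    rw [← PowerSeries.coeff_zero_eq_constantCoeff, h0,
      PowerSeries.coeff_zero_eq_constantCoeff, hf.const]
  have hfg : f = pcomp g (PowerSeries.X ^ p) := by
    apply PowerSeries.ext
    intro n
    rw [pcomp_Xpow_coeff hp.pos]
    by_cases h : p ∣ n
    · rw [if_pos h, hgk, Nat.mul_div_cancel' h]
    · rw [if_neg h, hap n h]
  refine ⟨g, ⟨hgc, hfg, hgc, ?_⟩, ?_⟩
  · -- the hom property
    funext d
    set s : ℕ := d.sum fun _ k => k with hsdef
    have hs : ((p • d : Fin 2 →₀ ℕ).sum fun _ k => k) = p * s := smul_sum p d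
    have h := congrFun hf.hom (p • d)
    have hterm : ∀ k, MvPowerSeries.coeff (p • d) (F ^ (p * k))
        = MvPowerSeries.coeff d ((frob p F) ^ k) := by
      intro k
      have hFp : F ^ p = sc p (frob p F) := pow_p_eq_sc hp F
      rw [pow_mul, hFp, ← sc_pow hp.pos,
        coeff_eq _ (sc p ((frob p F) ^ k)), sc_smul hp.pos]
      rfl
    have e1 : subst1 f F (p • d) = subst1 g (frob p F) d := by
      rw [subst1_apply, subst1_apply, hs, ← hsdef]
      rw [sum_mul_reindex hp.pos s
        (fun m => PowerSeries.coeff m f * MvPowerSeries.coeff (p • d) (F ^ m))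
        (fun m hm => by
          show PowerSeries.coeff m f * _ = 0
          rw [hap m hm, zero_mul])]
      apply Finset.sum_congr rfl
      intro k _
      rw [hterm k, hgk k]
    have hu : (subst1 f (MvPowerSeries.X 0) : MvPowerSeries (Fin 2) R)
        = sc p (subst1 g (MvPowerSeries.X 0)) := subst1_sc0 hp.pos f g hgk hap
    have hv : (subst1 f (MvPowerSeries.X 1) : MvPowerSeries (Fin 2) R)
        = sc p (subst1 g (MvPowerSeries.X 1)) := subst1_sc1 hp.pos f g hgk hap
    have hu0 : (subst1 g (MvPowerSeries.X 0) : MvPowerSeries (Fin 2) R) 0 = 0 := by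
      rw [subst1X_const, hgc]
    have hv0 : (subst1 g (MvPowerSeries.X 1) : MvPowerSeries (Fin 2) R) 0 = 0 := by
      rw [subst1X_const, hgc]
    have e2 : subst2 G (subst1 f (MvPowerSeries.X 0)) (subst1 f (MvPowerSeries.X 1)) (p • d)
        = subst2 G (subst1 g (MvPowerSeries.X 0)) (subst1 g (MvPowerSeries.X 1)) d := by
      rw [subst2_apply, subst2_apply, hs, ← hsdef, hu, hv]
      have step1 : ∑ ij ∈ Finset.range (p*s+1) ×ˢ Finset.range (p*s+1),
          MvPowerSeries.coeff (Finsupp.single 0 ij.1 + Finsupp.single 1 ij.2) G *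
            MvPowerSeries.coeff (p • d)
              ((sc p (subst1 g (MvPowerSeries.X 0))) ^ ij.1 *
                (sc p (subst1 g (MvPowerSeries.X 1))) ^ ij.2)
          = ∑ ij ∈ Finset.range (p*s+1) ×ˢ Finset.range (p*s+1),
          MvPowerSeries.coeff (Finsupp.single 0 ij.1 + Finsupp.single 1 ij.2) G *
            MvPowerSeries.coeff d
              ((subst1 g (MvPowerSeries.X 0)) ^ ij.1 *
                (subst1 g (MvPowerSeries.X 1)) ^ ij.2) := by
        apply Finset.sum_congr rfl
        intro ij _
        congr 1
        rw [← sc_pow hp.pos, ← sc_pow hp.pos, ← sc_mul hp.pos,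
          coeff_eq _ (sc p _), sc_smul hp.pos]
        rfl
      rw [step1]
      symm
      apply Finset.sum_subset
      · apply Finset.product_subset_product <;>
          exact Finset.range_subset_range.mpr (by nlinarith [hp.pos])
      · intro ij hbig hsmall
        rw [coeff_mulpow_zero hu0 hv0, mul_zero]
        rw [Finset.mem_product] at hsmall
        rw [Finset.mem_product, Finset.mem_range, Finset.mem_range] at hbig
        push_neg at hsmall
        by_cases h1 : ij.1 ∈ Finset.range (s+1)
        · have := hsmall h1
          rw [Finset.mem_range] at h1 this
          omega
        · rw [Finset.mem_range] at h1
          omega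
    rw [← e1, h, e2]
  · -- uniqueness
    intro g' _ hfg'
    apply PowerSeries.ext
    intro k
    rw [hgk k, hfg', pcomp_Xpow_coeff hp.pos, if_pos ⟨k, rfl⟩,
      Nat.mul_div_cancel_left k hp.pos]

end FGL
end

section
/- Let f : F → G be a homomorphism of formal group laws over a commutative ring R. Then f'(X)·F_Y(X,0) = f'(0)·G_Y(f(X),0) in R[[X]], where f' denotes the formal derivative of f, f'(0) its linear coefficient, and G_Y(f(X),0) denotes the substitution of f(X) into the one-variable power series G_Y(T,0). -/
namespace FGL

variable {R : Type*} [CommRing R]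

section Aux

open Finsupp

private lemma fin2_decomp (g : Fin 2 →₀ ℕ) :
    g = Finsupp.single 0 (g 0) + Finsupp.single 1 (g 1) := by
  ext i
  fin_cases i <;> simp [Finsupp.single_apply]

private lemma sum_single_aux {σ : Type*} (a : σ) (n : ℕ) :
    ((Finsupp.single a n).sum fun _ k => k) = n := by
  simp [Finsupp.sum_single_index]

private lemma sum_D_aux (n : ℕ) :
    ((Finsupp.single (0 : Fin 2) n + Finsupp.single 1 1).sum fun _ k => k) = n + 1 := by
  rw [Finsupp.sum_add_index' (fun _ => rfl) (fun _ _ _ => rfl)]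
  simp [Finsupp.sum_single_index]

/-- `F(X,0)` as a one-variable power series. -/
noncomputable def c0 (H : MvPowerSeries (Fin 2) R) : PowerSeries R :=
  PowerSeries.mk fun n => MvPowerSeries.coeff (Finsupp.single 0 n) H

private lemma coeff_c0 (H : MvPowerSeries (Fin 2) R) (n : ℕ) :
    PowerSeries.coeff n (c0 H) = MvPowerSeries.coeff (Finsupp.single 0 n) H :=
  PowerSeries.coeff_mk _ _

private lemma coeff_FY0 (H : MvPowerSeries (Fin 2) R) (n : ℕ) :
    PowerSeries.coeff n (FY0 H) =
      MvPowerSeries.coeff (Finsupp.single 0 n + Finsupp.single 1 1) H :=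
  PowerSeries.coeff_mk _ _

private lemma D_ne_zero (n : ℕ) :
    (Finsupp.single (0 : Fin 2) n + Finsupp.single 1 1) ≠ 0 := by
  intro h
  have := DFunLike.congr_fun h (1 : Fin 2)
  simp [Finsupp.single_apply] at this

private lemma c0_one : c0 (1 : MvPowerSeries (Fin 2) R) = 1 := by
  ext n
  simp only [coeff_c0, MvPowerSeries.coeff_one, PowerSeries.coeff_one,
    Finsupp.single_eq_zero]

private lemma FY0_one : FY0 (1 : MvPowerSeries (Fin 2) R) = 0 := by
  ext n
  simp [coeff_FY0, MvPowerSeries.coeff_one, D_ne_zero n]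

private lemma c0_mul (φ ψ : MvPowerSeries (Fin 2) R) :
    c0 (φ * ψ) = c0 φ * c0 ψ := by
  ext n
  rw [coeff_c0, PowerSeries.coeff_mul, MvPowerSeries.coeff_mul,
    Finsupp.antidiagonal_single, Finset.sum_map]
  refine Finset.sum_congr rfl fun p _ => ?_
  simp [coeff_c0]

private lemma FY0_mul (φ ψ : MvPowerSeries (Fin 2) R) :
    FY0 (φ * ψ) = c0 φ * FY0 ψ + FY0 φ * c0 ψ := by
  ext n
  rw [coeff_FY0, MvPowerSeries.coeff_mul]
  rw [Finset.sum_nbij' (i := fun (p : (Fin 2 →₀ ℕ) × (Fin 2 →₀ ℕ)) => ((p.1 0, p.2 0), (p.1 1, p.2 1)))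
    (j := fun q => (Finsupp.single 0 q.1.1 + Finsupp.single 1 q.2.1,
      Finsupp.single 0 q.1.2 + Finsupp.single 1 q.2.2))
    (t := Finset.HasAntidiagonal.antidiagonal n ×ˢ Finset.HasAntidiagonal.antidiagonal 1)
    (g := fun q => MvPowerSeries.coeff
        (Finsupp.single 0 q.1.1 + Finsupp.single 1 q.2.1) φ *
      MvPowerSeries.coeff (Finsupp.single 0 q.1.2 + Finsupp.single 1 q.2.2) ψ)]
  · rw [Finset.sum_product]
    have h1 : (Finset.HasAntidiagonal.antidiagonal 1 : Finset (ℕ × ℕ)) = {(0, 1), (1, 0)} := by decide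
    simp only [h1, Finset.sum_insert (by decide : ((0:ℕ),(1:ℕ)) ∉ ({(1,0)} : Finset (ℕ × ℕ))),
      Finset.sum_singleton]
    rw [map_add, PowerSeries.coeff_mul, PowerSeries.coeff_mul, ← Finset.sum_add_distrib]
    refine Finset.sum_congr rfl fun p _ => ?_
    simp only [coeff_c0, coeff_FY0, Finsupp.single_zero, add_zero]
  · rintro ⟨p1, p2⟩ hp
    rw [Finset.HasAntidiagonal.mem_antidiagonal] at hp
    have h0 := DFunLike.congr_fun hp (0 : Fin 2)
    have h1 := DFunLike.congr_fun hp (1 : Fin 2)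
    simp only [Finsupp.add_apply, Finsupp.single_apply] at h0 h1
    simp only [Finset.mem_product, Finset.HasAntidiagonal.mem_antidiagonal]
    constructor
    · simpa using h0
    · simpa using h1
  · rintro ⟨⟨a, b⟩, ⟨e, g⟩⟩ hq
    simp only [Finset.mem_product, Finset.HasAntidiagonal.mem_antidiagonal] at hq
    rw [Finset.HasAntidiagonal.mem_antidiagonal]
    ext i
    fin_cases i <;> simp [Finsupp.single_apply, hq.1, hq.2]
  · rintro ⟨p1, p2⟩ _
    simp only [Prod.mk.injEq]
    exact ⟨(fin2_decomp p1).symm, (fin2_decomp p2).symm⟩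
  · rintro ⟨⟨a, b⟩, ⟨e, g⟩⟩ _
    simp [Finsupp.single_apply]
  · rintro ⟨p1, p2⟩ _
    rw [← fin2_decomp p1, ← fin2_decomp p2]

private lemma c0_pow (H : MvPowerSeries (Fin 2) R) : ∀ m, c0 (H ^ m) = (c0 H) ^ m
  | 0 => by rw [pow_zero, pow_zero, c0_one]
  | m + 1 => by rw [pow_succ, pow_succ, c0_mul, c0_pow H m]

private lemma FY0_pow (H : MvPowerSeries (Fin 2) R) :
    ∀ m, FY0 (H ^ (m + 1)) = (m + 1 : ℕ) • ((c0 H) ^ m * FY0 H)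
  | 0 => by simp
  | m + 1 => by
    rw [pow_succ, FY0_mul, FY0_pow H m, c0_pow]
    simp only [nsmul_eq_mul, Nat.cast_add, Nat.cast_one]
    ring

private lemma coeff_subst1 {σ : Type*} (f : PowerSeries R) (G : MvPowerSeries σ R)
    (d : σ →₀ ℕ) :
    MvPowerSeries.coeff d (subst1 f G) =
      ∑ m ∈ Finset.range ((d.sum fun _ k => k) + 1),
        PowerSeries.coeff m f * MvPowerSeries.coeff d (G ^ m) := rfl

private lemma coeff_subst2 {σ : Type*} (F : MvPowerSeries (Fin 2) R)
    (a b : MvPowerSeries σ R) (d : σ →₀ ℕ) :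
    MvPowerSeries.coeff d (subst2 F a b) =
      ∑ ij ∈ Finset.range ((d.sum fun _ k => k) + 1) ×ˢ
          Finset.range ((d.sum fun _ k => k) + 1),
        MvPowerSeries.coeff (Finsupp.single 0 ij.1 + Finsupp.single 1 ij.2) F *
          MvPowerSeries.coeff d (a ^ ij.1 * b ^ ij.2) := rfl

private lemma coeff_pow_zero_s1 {f : PowerSeries R} (hc : PowerSeries.constantCoeff f = 0)
    {n m : ℕ} (h : n < m) : PowerSeries.coeff n (f ^ m) = 0 := by
  obtain ⟨g, rfl⟩ := PowerSeries.X_dvd_iff.mpr hc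
  rw [mul_pow, PowerSeries.coeff_X_pow_mul', if_neg (not_le.mpr h)]

private lemma c0_of_fgl {F : MvPowerSeries (Fin 2) R} (hF : IsFGL F) :
    c0 F = PowerSeries.X := by
  ext n
  have key := congrArg (MvPowerSeries.coeff (Finsupp.single (0 : ℕ) n)) hF.unit_left
  rw [coeff_subst2, sum_single_aux] at key
  rw [Finset.sum_eq_single (n, 0)] at key
  · rw [pow_zero, mul_one, MvPowerSeries.coeff_X_pow, if_pos rfl, mul_one,
      Finsupp.single_zero, add_zero, MvPowerSeries.coeff_X] at key
    rw [coeff_c0, key, PowerSeries.coeff_X]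
    congr 1
    simp only [eq_iff_iff]
    constructor
    · intro h
      exact (Finsupp.single_injective 0) h
    · rintro rfl; rfl
  · rintro ⟨i, j⟩ hb hne
    rcases j with _ | j
    · have hi : i ≠ n := by rintro rfl; exact hne rfl
      rw [pow_zero, mul_one, MvPowerSeries.coeff_X_pow, if_neg, mul_zero]
      intro h
      exact hi ((Finsupp.single_injective 0) h).symm
    · rw [zero_pow (Nat.succ_ne_zero j), mul_zero, map_zero, mul_zero]
  · intro h
    exact absurd (by simp : (n, 0) ∈ Finset.range (n+1) ×ˢ Finset.range (n+1)) h

private lemma coeffD_eq (x : MvPowerSeries (Fin 2) R) (n : ℕ) :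
    MvPowerSeries.coeff (Finsupp.single 0 n + Finsupp.single 1 1) x =
      PowerSeries.coeff n (FY0 x) := (coeff_FY0 x n).symm

private lemma c0_substX0 (f : PowerSeries R) :
    c0 (subst1 f (MvPowerSeries.X 0 : MvPowerSeries (Fin 2) R)) = f := by
  ext n
  rw [coeff_c0, coeff_subst1, sum_single_aux]
  rw [Finset.sum_eq_single n]
  · rw [MvPowerSeries.coeff_X_pow, if_pos rfl, mul_one]
  · intro m _ hm
    rw [MvPowerSeries.coeff_X_pow, if_neg, mul_zero]
    intro h
    exact hm ((Finsupp.single_injective 0) h).symm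
  · intro h
    exact absurd (Finset.self_mem_range_succ n) h

private lemma FY0_substX0 (f : PowerSeries R) :
    FY0 (subst1 f (MvPowerSeries.X 0 : MvPowerSeries (Fin 2) R)) = 0 := by
  ext n
  rw [coeff_FY0, coeff_subst1, sum_D_aux, map_zero]
  refine Finset.sum_eq_zero fun m _ => ?_
  rw [MvPowerSeries.coeff_X_pow, if_neg, mul_zero]
  intro h
  have := DFunLike.congr_fun h (1 : Fin 2)
  simp [Finsupp.single_apply] at this

private lemma FY0_pow_substX0 (f : PowerSeries R) :
    ∀ i, FY0 ((subst1 f (MvPowerSeries.X 0 : MvPowerSeries (Fin 2) R)) ^ i) = 0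
  | 0 => by rw [pow_zero, FY0_one]
  | i + 1 => by rw [FY0_pow, FY0_substX0, mul_zero, smul_zero]

private lemma c0_substX1 {f : PowerSeries R} (hc : PowerSeries.constantCoeff f = 0) :
    c0 (subst1 f (MvPowerSeries.X 1 : MvPowerSeries (Fin 2) R)) = 0 := by
  ext n
  rw [coeff_c0, coeff_subst1, sum_single_aux, map_zero]
  refine Finset.sum_eq_zero fun m _ => ?_
  rw [MvPowerSeries.coeff_X_pow]
  split_ifs with h
  · have hm : m = 0 := by
      have := DFunLike.congr_fun h (1 : Fin 2)
      simpa [Finsupp.single_apply] using this.symm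
    subst hm
    rw [mul_one, PowerSeries.coeff_zero_eq_constantCoeff, hc]
  · rw [mul_zero]

private lemma FY0_substX1 (f : PowerSeries R) :
    FY0 (subst1 f (MvPowerSeries.X 1 : MvPowerSeries (Fin 2) R)) =
      PowerSeries.C (PowerSeries.coeff 1 f) := by
  ext n
  rw [coeff_FY0, coeff_subst1, sum_D_aux, PowerSeries.coeff_C]
  rcases eq_or_ne n 0 with rfl | hn
  · rw [if_pos rfl, Finset.sum_eq_single 1]
    · rw [pow_one, MvPowerSeries.coeff_X, if_pos, mul_one]
      ext i
      fin_cases i <;> simp [Finsupp.single_apply]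
    · intro m _ hne
      rw [MvPowerSeries.coeff_X_pow, if_neg, mul_zero]
      intro h
      apply hne
      have := DFunLike.congr_fun h (1 : Fin 2)
      simpa [Finsupp.single_apply, eq_comm] using this
    · intro h
      exact absurd (by norm_num : (1 : ℕ) ∈ Finset.range (0 + 1 + 1)) h
  · rw [if_neg hn]
    refine Finset.sum_eq_zero fun m _ => ?_
    rw [MvPowerSeries.coeff_X_pow, if_neg, mul_zero]
    intro h
    have := DFunLike.congr_fun h (0 : Fin 2)
    simp [Finsupp.single_apply, hn] at this

private lemma FY0_pow_substX1 {f : PowerSeries R} (hc : PowerSeries.constantCoeff f = 0) :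
    ∀ j, j ≠ 1 → FY0 ((subst1 f (MvPowerSeries.X 1 : MvPowerSeries (Fin 2) R)) ^ j) = 0
  | 0, _ => by rw [pow_zero, FY0_one]
  | 1, h => absurd rfl h
  | j + 2, _ => by
    rw [FY0_pow, c0_substX1 hc, zero_pow (Nat.succ_ne_zero j), zero_mul, smul_zero]

end Aux

/-- For a homomorphism `f : F → G` of formal group laws over a commutative ring `R`,
`f'(X) · F_Y(X,0) = f'(0) · G_Y(f(X),0)` in `R[[X]]`. -/
theorem statement1 (R : Type*) [CommRing R]
    (F G : MvPowerSeries (Fin 2) R) (hF : IsFGL F) (hG : IsFGL G)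
    (f : PowerSeries R) (hf : IsHom F G f) :
    PowerSeries.derivativeFun f * FY0 F =
      PowerSeries.C (PowerSeries.coeff 1 f) * pcomp (FY0 G) f := by
  ext n
  have key := congrArg (MvPowerSeries.coeff
      (Finsupp.single (0 : Fin 2) n + Finsupp.single 1 1)) hf.hom
  rw [coeff_subst1, coeff_subst2, sum_D_aux] at key
  have hL : PowerSeries.coeff n (PowerSeries.derivativeFun f * FY0 F)
      = ∑ m ∈ Finset.range (n + 1 + 1), PowerSeries.coeff m f *
          MvPowerSeries.coeff (Finsupp.single 0 n + Finsupp.single 1 1) (F ^ m) := by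
    rw [Finset.sum_range_succ']
    have h0 : PowerSeries.coeff 0 f *
        MvPowerSeries.coeff (Finsupp.single 0 n + Finsupp.single 1 1)
          (F ^ (0 : ℕ)) = 0 := by
      rw [pow_zero, MvPowerSeries.coeff_one, if_neg (D_ne_zero n), mul_zero]
    rw [h0, add_zero, PowerSeries.coeff_mul,
      Finset.Nat.sum_antidiagonal_eq_sum_range_succ_mk]
    refine Finset.sum_congr rfl fun i hi => ?_
    change PowerSeries.coeff _ (PowerSeries.derivative R f) * _ = _
    rw [PowerSeries.coeff_derivativeFun, ← coeff_FY0, FY0_pow, c0_of_fgl hF,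
      map_nsmul, PowerSeries.coeff_X_pow_mul',
      if_pos (Nat.lt_succ_iff.mp (Finset.mem_range.mp hi)), nsmul_eq_mul]
    push_cast
    ring
  have hR2 : (∑ ij ∈ Finset.range (n + 1 + 1) ×ˢ Finset.range (n + 1 + 1),
        MvPowerSeries.coeff (Finsupp.single 0 ij.1 + Finsupp.single 1 ij.2) G *
          MvPowerSeries.coeff (Finsupp.single 0 n + Finsupp.single 1 1)
            ((subst1 f (MvPowerSeries.X 0) : MvPowerSeries (Fin 2) R) ^ ij.1 *
              (subst1 f (MvPowerSeries.X 1) : MvPowerSeries (Fin 2) R) ^ ij.2))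
      = ∑ i ∈ Finset.range (n + 1 + 1),
          MvPowerSeries.coeff (Finsupp.single 0 i + Finsupp.single 1 1) G *
            (PowerSeries.coeff n (f ^ i) * PowerSeries.coeff 1 f) := by
    rw [Finset.sum_product]
    refine Finset.sum_congr rfl fun i _ => ?_
    rw [Finset.sum_eq_single 1]
    · dsimp only
      congr 1
      rw [pow_one, coeffD_eq,
        FY0_mul, c0_pow, c0_substX0, FY0_substX1, FY0_pow_substX0, zero_mul,
        add_zero, PowerSeries.coeff_mul_C]
    · intro j _ hne
      dsimp only
      rw [coeffD_eq,
        FY0_mul, FY0_pow_substX1 hf.const j hne, mul_zero, FY0_pow_substX0,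
        zero_mul, add_zero, map_zero, mul_zero]
    · intro h
      exact absurd (Finset.mem_range.mpr (by omega)) h
  have hR1 : PowerSeries.coeff n
        (PowerSeries.C (PowerSeries.coeff 1 f) * pcomp (FY0 G) f)
      = ∑ i ∈ Finset.range (n + 1),
          MvPowerSeries.coeff (Finsupp.single 0 i + Finsupp.single 1 1) G *
            (PowerSeries.coeff n (f ^ i) * PowerSeries.coeff 1 f) := by
    rw [PowerSeries.coeff_C_mul]
    have : PowerSeries.coeff n (pcomp (FY0 G) f)
        = MvPowerSeries.coeff (Finsupp.single () n) (subst1 (FY0 G) f) := rfl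
    rw [this, coeff_subst1, sum_single_aux, Finset.mul_sum]
    refine Finset.sum_congr rfl fun i _ => ?_
    rw [coeff_FY0]
    have : MvPowerSeries.coeff (Finsupp.single () n) (f ^ i)
        = PowerSeries.coeff n (f ^ i) := rfl
    rw [this]
    ring
  rw [hL, key, hR2, hR1, Finset.sum_range_succ,
    coeff_pow_zero_s1 hf.const (Nat.lt_succ_self n), zero_mul, mul_zero, add_zero]


end FGL
end
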